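/- Fix a positive integer N. For every cubefree positive integer q, ‖ϑ_q^*‖_q² = (6t(q)/π²)² · φ(q), where ϑ_q^*(a) = γ_q^*(N−a). -/

import Mathlib

open scoped BigOperators
open Finset

attribute [local instance] Classical.propDecidable

noncomputable section

/-- `e_q(t) = exp(2πi·t/q)`. -/
def eQ (q : ℕ) (t : ℤ) : ℂ := Complex.exp (2 * Real.pi * Complex.I * (t : ℂ) / (q : ℂ))

/-- The Ramanujan sum `c_r(k) = ∑_{1 ≤ b ≤ r, gcd(b,r)=1} e_r(k·b)`. -/
def cR (r : ℕ) (k : ℤ) : ℂ :=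
  ∑ b ∈ (Finset.Icc 1 r).filter (fun b : ℕ => Nat.gcd b r = 1), eQ r (k * (b : ℤ))

/-- `μ²`: the indicator function of the squarefree integers (extended to `ℤ`). -/
def musq (m : ℤ) : ℝ := if Squarefree m then 1 else 0

/-- A positive integer is cubefree if no prime cube divides it. -/
def Cubefree (q : ℕ) : Prop := ∀ p : ℕ, p.Prime → ¬ p ^ 3 ∣ q

/-- The density `γ_q(a)` of squarefree numbers in the progression `a mod q`. -/
def gammaQ (q : ℕ) (a : ℤ) : ℝ :=
  if ∃ p : ℕ, p.Prime ∧ p ^ 2 ∣ q ∧ (p : ℤ) ^ 2 ∣ a then 0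
  else (6 / Real.pi ^ 2) * (∏ p ∈ q.primeFactors, (p : ℝ) ^ 2 / ((p : ℝ) ^ 2 - 1)) *
    ∏ p ∈ q.primeFactors.filter (fun p : ℕ => ¬ p ^ 2 ∣ q ∧ (p : ℤ) ∣ a), (1 - 1 / (p : ℝ))

/-- `γ_q^*(a) = ∑_{d ∣ q} μ(q/d) γ_d(a)`. -/
def gammaStar (q : ℕ) (a : ℤ) : ℝ :=
  ∑ d ∈ q.divisors, ((ArithmeticFunction.moebius (q / d) : ℤ) : ℝ) * gammaQ d a

/-- `t(q) = ∏_{p ∣ q} (−1)/(p²−1)`. -/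
def tQ (q : ℕ) : ℝ := ∏ p ∈ q.primeFactors, (-1) / ((p : ℝ) ^ 2 - 1)

/-- `ϑ_q^*(a) = γ_q^*(N − a)`. -/
def thetaStar (N q : ℕ) (a : ℤ) : ℝ := gammaStar q ((N : ℤ) - a)

/-- `ρ_q(a)` (relative to the fixed progression `a' mod q'`). -/
def rhoQ (q' : ℕ) (a' : ℤ) (q : ℕ) (a : ℤ) : ℝ :=
  if Int.gcd a q = 1 ∧ ((Nat.gcd q q' : ℤ) ∣ (a - a')) then
    (q : ℝ) / ((Nat.lcm q q').totient : ℝ)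
  else 0

/-- `ρ_q^*(a) = ∑_{d ∣ q} μ(q/d) ρ_d(a)`. -/
def rhoStar (q' : ℕ) (a' : ℤ) (q : ℕ) (a : ℤ) : ℝ :=
  ∑ d ∈ q.divisors, ((ArithmeticFunction.moebius (q / d) : ℤ) : ℝ) * rhoQ q' a' d a

/-- `ρ̃_q^*` for `q = q₁q₂²`: the explicit formula for `ρ_q^*` without the
divisibility condition `q₂² ∣ q'`. -/
def rhoTilde (q' : ℕ) (a' : ℤ) (q₁ q₂ : ℕ) (a : ℤ) : ℂ :=
  ((ArithmeticFunction.moebius (q₁ / Nat.gcd q₁ q') : ℤ) : ℂ) *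
    cR (q₁ / Nat.gcd q₁ q') a * cR (Nat.gcd q₁ q' * q₂ ^ 2) (a - a') /
    ((q'.totient : ℂ) * ((q₁ / Nat.gcd q₁ q').totient : ℂ))

/-- `η_q^*` for `q = q₁q₂²`. -/
def etaStar (N q' : ℕ) (a' : ℤ) (q₁ q₂ : ℕ) (a : ℤ) : ℂ :=
  (1 / 2) * (((Real.pi ^ 2 / (6 * tQ (q₁ * q₂ ^ 2)) * thetaStar N (q₁ * q₂ ^ 2) a : ℝ) : ℂ)
    + (((q'.totient * (q₁ / Nat.gcd q₁ q').totient : ℕ) : ℂ) /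
        ((ArithmeticFunction.moebius (q₁ / Nat.gcd q₁ q') : ℤ) : ℂ)) * rhoTilde q' a' q₁ q₂ a)

/-- `κ_q^*` for `q = q₁q₂²`. -/
def kappaStar (N q' : ℕ) (a' : ℤ) (q₁ q₂ : ℕ) (a : ℤ) : ℂ :=
  (1 / 2) * (((Real.pi ^ 2 / (6 * tQ (q₁ * q₂ ^ 2)) * thetaStar N (q₁ * q₂ ^ 2) a : ℝ) : ℂ)
    - (((q'.totient * (q₁ / Nat.gcd q₁ q').totient : ℕ) : ℂ) /
        ((ArithmeticFunction.moebius (q₁ / Nat.gcd q₁ q') : ℤ) : ℂ)) * rhoTilde q' a' q₁ q₂ a)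

/-- The local Hermitian product `[f|g]_q = (1/q) ∑_{a mod q} f(a) conj(g(a))`. -/
def localProd (q : ℕ) (f g : ℤ → ℂ) : ℂ :=
  (1 / (q : ℂ)) * ∑ a ∈ Finset.range q, f (a : ℤ) * (starRingEnd ℂ) (g (a : ℤ))

/-- The global Hermitian product `[f|g] = ∑_{n ≤ N} f(n) conj(g(n))`. -/
def globalProd (N : ℕ) (f g : ℤ → ℂ) : ℂ :=
  ∑ n ∈ Finset.Icc (1 : ℤ) (N : ℤ), f n * (starRingEnd ℂ) (g n)

/-- `∇_q` lifts a function on `ℤ/qℤ` (given on integer representatives, periodically)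
to the integers by reduction mod `q`. -/
def nabla (q : ℕ) (h : ℤ → ℂ) (n : ℤ) : ℂ := h (n % (q : ℤ))

/-- `f(n) = Λ(n)·1_{n ≡ a' (mod q')}`. -/
def fLam (q' : ℕ) (a' : ℤ) (n : ℤ) : ℂ :=
  if n ≡ a' [ZMOD (q' : ℤ)] then ((ArithmeticFunction.vonMangoldt n.toNat : ℝ) : ℂ) else 0

/-- `g(n) = μ²(N − n)`. -/
def gSF (N : ℕ) (n : ℤ) : ℂ := ((musq ((N : ℤ) - n) : ℝ) : ℂ)

/-- The sum-of-divisors function `σ`. -/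
def sigmaFn (m : ℕ) : ℕ := ∑ d ∈ m.divisors, d

/-- The weighted representation count `𝓡_{a,q}(N)`. -/
def repCount (N q : ℕ) (a : ℤ) : ℝ :=
  ∑ p ∈ (Finset.range (N + 1)).filter (fun p : ℕ => p.Prime ∧ (p : ℤ) ≡ a [ZMOD (q : ℤ)]),
    musq ((N : ℤ) - (p : ℤ)) * Real.log p

/-- The singular series `𝔖_{a,q}(N)`. -/
def singSeries (N q : ℕ) (a : ℤ) : ℂ :=
  (6 / ((q.totient : ℂ) * (Real.pi : ℂ) ^ 2)) *
  ∏' p : Nat.Primes,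
    if ¬ ((p : ℕ) ∣ q) then
      1 + cR (p : ℕ) (N : ℤ) / ((((p : ℕ) : ℂ) ^ 2 - 1) * (((p : ℕ) : ℂ) - 1))
    else if ¬ ((p : ℕ) ^ 2 ∣ q) then
      1 - cR (p : ℕ) ((N : ℤ) - a) / (((p : ℕ) : ℂ) ^ 2 - 1)
    else
      1 - (cR (p : ℕ) ((N : ℤ) - a) + cR ((p : ℕ) ^ 2) ((N : ℤ) - a)) / (((p : ℕ) : ℂ) ^ 2 - 1)

/-- `h_q(r) = ∑_{a mod q} φ(q')ρ_q^*(a) e_q(−ra)`. -/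
def hQ (q' : ℕ) (a' : ℤ) (q : ℕ) (r : ℤ) : ℂ :=
  ∑ a ∈ Finset.range q,
    (((q'.totient : ℝ) * rhoStar q' a' q (a : ℤ) : ℝ) : ℂ) * eQ q (-(r * (a : ℤ)))

/-- `b(q) = ∑_{1≤r≤q, gcd(r,q)=1} e_q(rN) h_q(r)`. -/
def bQ (N q' : ℕ) (a' : ℤ) (q : ℕ) : ℂ :=
  ∑ r ∈ (Finset.Icc 1 q).filter (fun r : ℕ => Nat.gcd r q = 1), eQ q ((r : ℤ) * (N : ℤ)) * hQ q' a' q r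


-- auxiliary defs
def cloc (p e : ℕ) (a : ℤ) : ℝ :=
  if e = 1 then (if (p : ℤ) ∣ a then (p : ℝ) - 1 else -1)
  else (if (p : ℤ) ^ 2 ∣ a then (p : ℝ) * ((p : ℝ) - 1)
        else if (p : ℤ) ∣ a then -(p : ℝ) else 0)

def Cfun (q : ℕ) (a : ℤ) : ℝ := ∏ p ∈ q.primeFactors, cloc p (q.factorization p) a

lemma pi_sq_ne : (Real.pi ^ 2 : ℝ) ≠ 0 := pow_ne_zero 2 Real.pi_ne_zero

lemma psq_sub_one_ne {p : ℕ} (hp : p.Prime) : ((p : ℝ) ^ 2 - 1) ≠ 0 := by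
  have h2 : (2 : ℝ) ≤ (p : ℝ) := by exact_mod_cast hp.two_le
  nlinarith

lemma gammaQ_one (a : ℤ) : gammaQ 1 a = 6 / Real.pi ^ 2 := by
  have h : ¬ ∃ p : ℕ, p.Prime ∧ p ^ 2 ∣ 1 ∧ (p : ℤ) ^ 2 ∣ a := by
    rintro ⟨p, hp, hd, -⟩
    have := Nat.le_of_dvd one_pos hd
    nlinarith [hp.two_le]
  rw [gammaQ, if_neg h]
  simp

lemma gammaQ_prime {p : ℕ} (hp : p.Prime) (a : ℤ) :
    gammaQ p a = (6 / Real.pi ^ 2) * ((p : ℝ) ^ 2 / ((p : ℝ) ^ 2 - 1)) *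
      (if (p : ℤ) ∣ a then 1 - 1 / (p : ℝ) else 1) := by
  have h : ¬ ∃ r : ℕ, r.Prime ∧ r ^ 2 ∣ p ∧ (r : ℤ) ^ 2 ∣ a := by
    rintro ⟨r, hr, hd, -⟩
    have hrp : r ∣ p := (dvd_pow_self r two_ne_zero).trans hd
    have : r = p := ((Nat.prime_dvd_prime_iff_eq hr hp).mp hrp)
    subst this
    have := Nat.le_of_dvd hp.pos hd
    nlinarith [hr.two_le]
  have hpf : p.primeFactors = {p} := hp.primeFactors
  have hnd : ¬ p ^ 2 ∣ p := by
    intro hd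
    have := Nat.le_of_dvd hp.pos hd
    nlinarith [hp.two_le]
  rw [gammaQ, if_neg h, hpf]
  by_cases hpa : (p : ℤ) ∣ a
  · rw [if_pos hpa]
    rw [Finset.filter_singleton, if_pos ⟨hnd, hpa⟩]
    simp
  · rw [if_neg hpa]
    rw [Finset.filter_singleton, if_neg (by tauto)]
    simp

lemma gammaQ_prime_sq {p : ℕ} (hp : p.Prime) (a : ℤ) :
    gammaQ (p ^ 2) a = if (p : ℤ) ^ 2 ∣ a then 0
      else (6 / Real.pi ^ 2) * ((p : ℝ) ^ 2 / ((p : ℝ) ^ 2 - 1)) := by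
  have hE : (∃ r : ℕ, r.Prime ∧ r ^ 2 ∣ p ^ 2 ∧ (r : ℤ) ^ 2 ∣ a) ↔ (p : ℤ) ^ 2 ∣ a := by
    constructor
    · rintro ⟨r, hr, hd, hda⟩
      have hrp : r ∣ p := hr.dvd_of_dvd_pow ((dvd_pow_self r two_ne_zero).trans hd)
      have : r = p := (Nat.prime_dvd_prime_iff_eq hr hp).mp hrp
      subst this; exact hda
    · intro hd; exact ⟨p, hp, dvd_rfl, hd⟩
  have hpf : (p ^ 2).primeFactors = {p} := Nat.primeFactors_prime_pow two_ne_zero hp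
  rw [gammaQ, hpf]
  by_cases hd : (p : ℤ) ^ 2 ∣ a
  · rw [if_pos (hE.mpr hd), if_pos hd]
  · rw [if_neg (fun h => hd (hE.mp h)), if_neg hd]
    rw [Finset.filter_singleton, if_neg (by intro h; exact h.1 dvd_rfl)]
    simp

set_option maxHeartbeats 1000000 in
lemma gammaQ_mul {m n : ℕ} (hmn : Nat.Coprime m n) (hm : 0 < m) (hn : 0 < n) (a : ℤ) :
    gammaQ (m * n) a = (Real.pi ^ 2 / 6) * (gammaQ m a * gammaQ n a) := by
  have hsq : ∀ {p : ℕ}, p.Prime → (p ^ 2 ∣ m * n ↔ p ^ 2 ∣ m ∨ p ^ 2 ∣ n) := by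
    intro p hp
    constructor
    · intro hd
      rcases hp.dvd_mul.mp ((dvd_pow_self p two_ne_zero).trans hd) with h | h
      · exact Or.inl (((hmn.coprime_dvd_left h).pow_left 2).dvd_of_dvd_mul_right hd)
      · exact Or.inr (((hmn.symm.coprime_dvd_left h).pow_left 2).dvd_of_dvd_mul_left hd)
    · rintro (h | h)
      · exact dvd_mul_of_dvd_left h n
      · exact dvd_mul_of_dvd_right h m
  have hE : (∃ p : ℕ, p.Prime ∧ p ^ 2 ∣ m * n ∧ (p : ℤ) ^ 2 ∣ a) ↔
      ((∃ p : ℕ, p.Prime ∧ p ^ 2 ∣ m ∧ (p : ℤ) ^ 2 ∣ a) ∨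
       (∃ p : ℕ, p.Prime ∧ p ^ 2 ∣ n ∧ (p : ℤ) ^ 2 ∣ a)) := by
    constructor
    · rintro ⟨p, hp, hd, hda⟩
      rcases (hsq hp).mp hd with h | h
      · exact Or.inl ⟨p, hp, h, hda⟩
      · exact Or.inr ⟨p, hp, h, hda⟩
    · rintro (⟨p, hp, h, hda⟩ | ⟨p, hp, h, hda⟩)
      · exact ⟨p, hp, (hsq hp).mpr (Or.inl h), hda⟩
      · exact ⟨p, hp, (hsq hp).mpr (Or.inr h), hda⟩
  by_cases h1 : ∃ p : ℕ, p.Prime ∧ p ^ 2 ∣ m ∧ (p : ℤ) ^ 2 ∣ a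
  · have e1 : gammaQ (m * n) a = 0 := by rw [gammaQ, if_pos (hE.mpr (Or.inl h1))]
    have e2 : gammaQ m a = 0 := by rw [gammaQ, if_pos h1]
    rw [e1, e2]; ring
  by_cases h2 : ∃ p : ℕ, p.Prime ∧ p ^ 2 ∣ n ∧ (p : ℤ) ^ 2 ∣ a
  · have e1 : gammaQ (m * n) a = 0 := by rw [gammaQ, if_pos (hE.mpr (Or.inr h2))]
    have e2 : gammaQ n a = 0 := by rw [gammaQ, if_pos h2]
    rw [e1, e2]; ring
  have hmn0 : ¬ ∃ p : ℕ, p.Prime ∧ p ^ 2 ∣ m * n ∧ (p : ℤ) ^ 2 ∣ a := by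
    intro h
    rcases hE.mp h with h | h
    exacts [h1 h, h2 h]
  simp only [gammaQ]
  rw [if_neg hmn0, if_neg h1, if_neg h2]
  have hpf : (m * n).primeFactors = m.primeFactors ∪ n.primeFactors := hmn.primeFactors_mul
  have hdisj := hmn.disjoint_primeFactors
  have keym : ∀ p ∈ m.primeFactors, ((¬ p ^ 2 ∣ m * n ∧ (p : ℤ) ∣ a) ↔ (¬ p ^ 2 ∣ m ∧ (p : ℤ) ∣ a)) := by
    intro p hpm
    have hp := Nat.prime_of_mem_primeFactors hpm
    have hpn : ¬ p ^ 2 ∣ n := by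
      intro h
      have := (hmn.coprime_dvd_left (Nat.dvd_of_mem_primeFactors hpm)).eq_one_of_dvd
        ((dvd_pow_self p two_ne_zero).trans h)
      exact hp.one_lt.ne' this
    rw [hsq hp]
    tauto
  have keyn : ∀ p ∈ n.primeFactors, ((¬ p ^ 2 ∣ m * n ∧ (p : ℤ) ∣ a) ↔ (¬ p ^ 2 ∣ n ∧ (p : ℤ) ∣ a)) := by
    intro p hpn
    have hp := Nat.prime_of_mem_primeFactors hpn
    have hpm : ¬ p ^ 2 ∣ m := by
      intro h
      have := (hmn.symm.coprime_dvd_left (Nat.dvd_of_mem_primeFactors hpn)).eq_one_of_dvd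
        ((dvd_pow_self p two_ne_zero).trans h)
      exact hp.one_lt.ne' this
    rw [hsq hp]
    tauto
  rw [hpf, Finset.prod_union hdisj, Finset.filter_union,
    Finset.prod_union (hdisj.mono (Finset.filter_subset _ _) (Finset.filter_subset _ _)),
    Finset.filter_congr keym, Finset.filter_congr keyn]
  have hm1 : (∏ x ∈ m.primeFactors, ((x : ℝ) ^ 2 - 1)) ≠ 0 :=
    Finset.prod_ne_zero_iff.mpr fun x hx => psq_sub_one_ne (Nat.prime_of_mem_primeFactors hx)
  have hn1 : (∏ x ∈ n.primeFactors, ((x : ℝ) ^ 2 - 1)) ≠ 0 :=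
    Finset.prod_ne_zero_iff.mpr fun x hx => psq_sub_one_ne (Nat.prime_of_mem_primeFactors hx)
  field_simp

def Garith (a : ℤ) : ArithmeticFunction ℝ :=
  ⟨fun d => if d = 0 then 0 else (Real.pi ^ 2 / 6) * gammaQ d a, by simp⟩

lemma Garith_apply {d : ℕ} (hd : d ≠ 0) (a : ℤ) :
    Garith a d = (Real.pi ^ 2 / 6) * gammaQ d a := if_neg hd

lemma Garith_one (a : ℤ) : Garith a 1 = 1 := by
  rw [Garith_apply one_ne_zero, gammaQ_one]
  field_simp

lemma Garith_prime {p : ℕ} (hp : p.Prime) (a : ℤ) :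
    Garith a p = (p : ℝ) ^ 2 / ((p : ℝ) ^ 2 - 1) * (if (p : ℤ) ∣ a then 1 - 1 / (p : ℝ) else 1) := by
  rw [Garith_apply hp.pos.ne', gammaQ_prime hp]
  have h1 := psq_sub_one_ne hp
  have hp0 : (p : ℝ) ≠ 0 := Nat.cast_ne_zero.mpr hp.pos.ne'
  by_cases hpa : (p : ℤ) ∣ a
  · rw [if_pos hpa]; field_simp
  · rw [if_neg hpa]; field_simp

lemma Garith_prime_sq {p : ℕ} (hp : p.Prime) (a : ℤ) :
    Garith a (p ^ 2) = if (p : ℤ) ^ 2 ∣ a then 0 else (p : ℝ) ^ 2 / ((p : ℝ) ^ 2 - 1) := by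
  rw [Garith_apply (pow_ne_zero 2 hp.pos.ne'), gammaQ_prime_sq hp]
  by_cases h : (p : ℤ) ^ 2 ∣ a
  · rw [if_pos h, if_pos h]; ring
  · rw [if_neg h, if_neg h]
    have h1 := psq_sub_one_ne hp
    field_simp

lemma Garith_isMult (a : ℤ) : (Garith a).IsMultiplicative := by
  rw [ArithmeticFunction.IsMultiplicative.iff_ne_zero]
  refine ⟨Garith_one a, ?_⟩
  intro m n hm hn hmn
  rw [Garith_apply (Nat.mul_ne_zero hm hn), Garith_apply hm, Garith_apply hn,
    gammaQ_mul hmn (Nat.pos_of_ne_zero hm) (Nat.pos_of_ne_zero hn)]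
  ring

def Mstar (a : ℤ) : ArithmeticFunction ℝ :=
  ((ArithmeticFunction.moebius : ArithmeticFunction ℤ) : ArithmeticFunction ℝ) * Garith a

lemma Mstar_isMult (a : ℤ) : (Mstar a).IsMultiplicative :=
  ArithmeticFunction.isMultiplicative_moebius.intCast.mul (Garith_isMult a)

lemma Mstar_apply (q : ℕ) (a : ℤ) :
    Mstar a q = ∑ d ∈ q.divisors, ((ArithmeticFunction.moebius (q / d) : ℤ) : ℝ) * Garith a d := by
  rw [Mstar, ArithmeticFunction.mul_apply,
    ← Nat.sum_divisorsAntidiagonal' (fun i j =>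
      ((ArithmeticFunction.moebius i : ℤ) : ℝ) * Garith a j)]
  refine Finset.sum_congr rfl fun d _ => ?_
  rw [ArithmeticFunction.intCoe_apply]

lemma gammaStar_eq_Mstar (q : ℕ) (a : ℤ) :
    gammaStar q a = (6 / Real.pi ^ 2) * Mstar a q := by
  rw [gammaStar, Mstar_apply, Finset.mul_sum]
  refine Finset.sum_congr rfl fun d hd => ?_
  rw [Garith_apply (Nat.pos_of_mem_divisors hd).ne']
  field_simp

lemma Mstar_prime {p : ℕ} (hp : p.Prime) (a : ℤ) :
    Mstar a p = (-1 / ((p : ℝ) ^ 2 - 1)) * cloc p 1 a := by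
  conv_lhs => rw [← pow_one p]
  rw [Mstar_apply, Nat.sum_divisors_prime_pow hp]
  rw [Finset.sum_range_succ, Finset.sum_range_one]
  norm_num
  rw [Nat.div_self hp.pos, ArithmeticFunction.moebius_apply_prime hp,
    ArithmeticFunction.moebius_apply_one, Garith_one, Garith_prime hp]
  have hp1 := psq_sub_one_ne hp
  have hp0 : (p : ℝ) ≠ 0 := Nat.cast_ne_zero.mpr hp.pos.ne'
  by_cases hpa : (p : ℤ) ∣ a
  · rw [if_pos hpa]
    simp only [cloc, if_pos rfl, if_pos hpa, if_true]
    field_simp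
    ring
  · rw [if_neg hpa]
    simp only [cloc, if_pos rfl, if_neg hpa, if_true]
    field_simp
    push_cast
    ring

lemma Mstar_prime_sq {p : ℕ} (hp : p.Prime) (a : ℤ) :
    Mstar a (p ^ 2) = (-1 / ((p : ℝ) ^ 2 - 1)) * cloc p 2 a := by
  rw [Mstar_apply, Nat.sum_divisors_prime_pow hp]
  rw [Finset.sum_range_succ, Finset.sum_range_succ, Finset.sum_range_one]
  norm_num
  rw [Nat.div_self (pow_pos hp.pos 2), ArithmeticFunction.moebius_apply_one,
    show p ^ 2 / p = p from by rw [pow_two, Nat.mul_div_cancel_left _ hp.pos],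
    ArithmeticFunction.moebius_apply_prime hp,
    ArithmeticFunction.moebius_apply_prime_pow hp two_ne_zero,
    Garith_one, Garith_prime hp, Garith_prime_sq hp]
  have hp1 := psq_sub_one_ne hp
  have hp0 : (p : ℝ) ≠ 0 := Nat.cast_ne_zero.mpr hp.pos.ne'
  by_cases h2 : (p : ℤ) ^ 2 ∣ a
  · have h1 : (p : ℤ) ∣ a := (dvd_pow_self _ two_ne_zero).trans h2
    rw [if_pos h2, if_pos h1]
    simp only [cloc, if_pos h2]
    norm_num
    field_simp
  · rw [if_neg h2]
    by_cases h1 : (p : ℤ) ∣ a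
    · rw [if_pos h1]
      simp only [cloc, if_neg h2, if_pos h1]
      norm_num
      field_simp
      ring
    · rw [if_neg h1]
      simp only [cloc, if_neg h2, if_neg h1]
      norm_num

lemma cubefree_exp {q p : ℕ} (hcf : Cubefree q) (hp : p ∈ q.primeFactors) :
    q.factorization p = 1 ∨ q.factorization p = 2 := by
  have hpp := Nat.prime_of_mem_primeFactors hp
  have h1 : q.factorization p ≠ 0 := by
    rw [← Finsupp.mem_support_iff, Nat.support_factorization]; exact hp
  have h2 : q.factorization p < 3 := by
    by_contra hcon
    push_neg at hcon
    exact hcf p hpp ((pow_dvd_pow p hcon).trans (Nat.ordProj_dvd q p))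
  omega

lemma gammaStar_eq {q : ℕ} (hq : 0 < q) (hcf : Cubefree q) (a : ℤ) :
    gammaStar q a = (6 / Real.pi ^ 2) * tQ q * Cfun q a := by
  rw [gammaStar_eq_Mstar, (Mstar_isMult a).multiplicative_factorization _ hq.ne']
  have key : q.factorization.prod (fun p k => Mstar a (p ^ k)) = tQ q * Cfun q a := by
    rw [Finsupp.prod, Nat.support_factorization, tQ, Cfun, ← Finset.prod_mul_distrib]
    refine Finset.prod_congr rfl fun p hp => ?_
    have hpp := Nat.prime_of_mem_primeFactors hp
    rcases cubefree_exp hcf hp with h | h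
    · rw [h, pow_one, Mstar_prime hpp]
    · rw [h, Mstar_prime_sq hpp]
  rw [key]
  ring

lemma Cfun_one (a : ℤ) : Cfun 1 a = 1 := by simp [Cfun]

lemma Cfun_prime_pow {p : ℕ} (hp : p.Prime) {e : ℕ} (he : e ≠ 0) (a : ℤ) :
    Cfun (p ^ e) a = cloc p e a := by
  rw [Cfun, Nat.primeFactors_prime_pow he hp, Finset.prod_singleton, hp.factorization_pow]
  simp

lemma Cfun_mul {m n : ℕ} (hm : m ≠ 0) (hn : n ≠ 0) (hmn : Nat.Coprime m n) (a : ℤ) :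
    Cfun (m * n) a = Cfun m a * Cfun n a := by
  rw [Cfun, hmn.primeFactors_mul, Finset.prod_union hmn.disjoint_primeFactors, Cfun, Cfun]
  congr 1
  · refine Finset.prod_congr rfl fun p hp => ?_
    have hpp := Nat.prime_of_mem_primeFactors hp
    have h0 : n.factorization p = 0 := by
      refine Nat.factorization_eq_zero_of_not_dvd fun h => hpp.one_lt.ne' ?_
      exact (hmn.coprime_dvd_left (Nat.dvd_of_mem_primeFactors hp)).eq_one_of_dvd h
    rw [Nat.factorization_mul hm hn, Finsupp.add_apply, h0, add_zero]
  · refine Finset.prod_congr rfl fun p hp => ?_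
    have hpp := Nat.prime_of_mem_primeFactors hp
    have h0 : m.factorization p = 0 := by
      refine Nat.factorization_eq_zero_of_not_dvd fun h => hpp.one_lt.ne' ?_
      exact (hmn.symm.coprime_dvd_left (Nat.dvd_of_mem_primeFactors hp)).eq_one_of_dvd h
    rw [Nat.factorization_mul hm hn, Finsupp.add_apply, h0, zero_add]

lemma cloc_congr {p : ℕ} {e : ℕ} (he : e = 1 ∨ e = 2) {a b : ℤ}
    (h : ((p : ℤ) ^ e) ∣ (a - b)) : cloc p e a = cloc p e b := by
  have key : ∀ d : ℤ, d ∣ (p : ℤ) ^ e → (d ∣ a ↔ d ∣ b) := by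
    intro d hd
    have hab : d ∣ a - b := hd.trans h
    constructor
    · intro ha; have := dvd_sub ha hab; simpa using this
    · intro hb; have := dvd_add hb hab; simpa using this
  rcases he with h1 | h1 <;> subst h1
  · have k1 : ((p : ℤ) ∣ a ↔ (p : ℤ) ∣ b) := key (p : ℤ) (by simp)
    simp only [cloc, k1]
    simp
  · have k1 : ((p : ℤ) ∣ a ↔ (p : ℤ) ∣ b) := key (p : ℤ) (dvd_pow_self _ two_ne_zero)
    have k2 : ((p : ℤ) ^ 2 ∣ a ↔ (p : ℤ) ^ 2 ∣ b) := key _ dvd_rfl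
    simp only [cloc, k1, k2]

lemma Cfun_congr {q : ℕ} (hq : 0 < q) (hcf : Cubefree q) {a b : ℤ}
    (h : (q : ℤ) ∣ (a - b)) : Cfun q a = Cfun q b := by
  refine Finset.prod_congr rfl fun p hp => ?_
  refine cloc_congr (cubefree_exp hcf hp) ?_
  have h1 : ((p : ℤ)) ^ (q.factorization p) ∣ (q : ℤ) := by
    exact_mod_cast Int.natCast_dvd_natCast.mpr (Nat.ordProj_dvd q p)
  exact h1.trans h

lemma sum_range_mul_decomp (m n : ℕ) (f : ℕ → ℝ) :
    ∑ a ∈ Finset.range (m * n), f a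
      = ∑ i ∈ Finset.range m, ∑ j ∈ Finset.range n, f (i + m * j) := by
  rw [← Finset.sum_product']
  refine Finset.sum_bij' (fun a _ => ((a % m : ℕ), (a / m : ℕ)))
    (fun x _ => x.1 + m * x.2) ?_ ?_ ?_ ?_ ?_
  · intro a ha
    rw [Finset.mem_range] at ha
    have hm : 0 < m := by
      rcases Nat.eq_zero_or_pos m with h | h
      · subst h; simp at ha
      · exact h
    rw [Finset.mem_product, Finset.mem_range, Finset.mem_range]
    refine ⟨Nat.mod_lt a hm, ?_⟩
    rw [Nat.div_lt_iff_lt_mul hm]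
    exact lt_of_lt_of_le ha (by rw [mul_comm])
  · intro x hx
    rw [Finset.mem_product, Finset.mem_range, Finset.mem_range] at hx
    rw [Finset.mem_range]
    calc x.1 + m * x.2 < m + m * x.2 := by omega
      _ = m * (x.2 + 1) := by ring
      _ ≤ m * n := Nat.mul_le_mul_left m hx.2
  · intro a _
    exact Nat.mod_add_div a m
  · intro x hx
    rw [Finset.mem_product, Finset.mem_range, Finset.mem_range] at hx
    have hm : 0 < m := lt_of_le_of_lt (Nat.zero_le _) hx.1
    ext
    · simp only [Nat.add_mul_mod_self_left]
      exact Nat.mod_eq_of_lt hx.1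
    · simp only [Nat.add_mul_div_left _ _ hm]
      rw [Nat.div_eq_of_lt hx.1, zero_add]
  · intro a _
    rw [Nat.mod_add_div a m]

lemma sum_range_zmod {n : ℕ} [NeZero n] (f : ZMod n → ℝ) :
    ∑ j ∈ Finset.range n, f (j : ZMod n) = ∑ x : ZMod n, f x := by
  refine Finset.sum_bij' (fun a _ => ((a : ZMod n))) (fun x _ => x.val) ?_ ?_ ?_ ?_ ?_
  · intros; exact Finset.mem_univ _
  · intro x _; exact Finset.mem_range.mpr (ZMod.val_lt x)
  · intro a ha; exact ZMod.val_cast_of_lt (Finset.mem_range.mp ha)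
  · intro x _; exact ZMod.natCast_rightInverse x
  · intros; rfl

lemma eq_zmod_lift {n : ℕ} (hn : 0 < n) (g : ℤ → ℝ)
    (hg : ∀ a b : ℤ, (n : ℤ) ∣ (a - b) → g a = g b) (a : ℤ) :
    g a = g (((a : ZMod n)).val : ℤ) := by
  haveI : NeZero n := ⟨hn.ne'⟩
  refine hg a _ ⟨a / n, ?_⟩
  rw [ZMod.val_intCast, Int.emod_def]
  ring

lemma crt_sum {m n : ℕ} (hm : 0 < m) (hn : 0 < n) (hmn : Nat.Coprime m n)
    (f g : ℤ → ℝ) (hf : ∀ a b : ℤ, (m : ℤ) ∣ (a - b) → f a = f b)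
    (hg : ∀ a b : ℤ, (n : ℤ) ∣ (a - b) → g a = g b) :
    ∑ a ∈ Finset.range (m * n), f (a : ℤ) * g (a : ℤ)
      = (∑ a ∈ Finset.range m, f (a : ℤ)) * (∑ a ∈ Finset.range n, g (a : ℤ)) := by
  haveI : NeZero n := ⟨hn.ne'⟩
  rw [sum_range_mul_decomp m n (fun a => f (a : ℤ) * g (a : ℤ))]
  have step1 : ∀ i j : ℕ, f ((i + m * j : ℕ) : ℤ) = f (i : ℤ) := fun i j =>
    hf _ _ ⟨j, by push_cast; ring⟩
  set G : ZMod n → ℝ := fun x => g ((x.val : ℤ)) with hG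
  have hgz : ∀ b : ℤ, g b = G ((b : ZMod n)) := fun b => eq_zmod_lift hn g hg b
  have step2 : ∀ i : ℕ, ∑ j ∈ Finset.range n, g ((i + m * j : ℕ) : ℤ)
      = ∑ a ∈ Finset.range n, g (a : ℤ) := by
    intro i
    have hbij : Function.Bijective (fun x : ZMod n => ((i : ℤ) : ZMod n) + ((m : ℤ) : ZMod n) * x) := by
      have hu : IsUnit (((m : ℤ) : ZMod n)) := by
        refine ⟨ZMod.unitOfCoprime m hmn, ?_⟩
        rw [ZMod.coe_unitOfCoprime]
        push_cast
        rfl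
      have h1 : Function.Bijective (fun x : ZMod n => ((m : ℤ) : ZMod n) * x) := by
        have h2 := (Units.mulLeft hu.unit).bijective
        simpa using h2
      exact (Equiv.addLeft (((i : ℤ) : ZMod n))).bijective.comp h1
    calc ∑ j ∈ Finset.range n, g ((i + m * j : ℕ) : ℤ)
        = ∑ j ∈ Finset.range n, G (((i : ℤ) : ZMod n) + ((m : ℤ) : ZMod n) * ((j : ℕ) : ZMod n)) := by
          refine Finset.sum_congr rfl fun j _ => ?_
          rw [hgz]
          congr 1
          push_cast
          ring
      _ = ∑ x : ZMod n, G (((i : ℤ) : ZMod n) + ((m : ℤ) : ZMod n) * x) :=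
          sum_range_zmod (fun x => G (((i : ℤ) : ZMod n) + ((m : ℤ) : ZMod n) * x))
      _ = ∑ x : ZMod n, G x := Fintype.sum_bijective _ hbij _ _ (fun x => rfl)
      _ = ∑ a ∈ Finset.range n, g (a : ℤ) := by
          rw [← sum_range_zmod G]
          refine Finset.sum_congr rfl fun a _ => ?_
          rw [hgz (a : ℤ)]
          norm_cast
  calc ∑ i ∈ Finset.range m, ∑ j ∈ Finset.range n, f ((i + m * j : ℕ) : ℤ) * g ((i + m * j : ℕ) : ℤ)
      = ∑ i ∈ Finset.range m, f (i : ℤ) * ∑ j ∈ Finset.range n, g ((i + m * j : ℕ) : ℤ) := by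
        refine Finset.sum_congr rfl fun i _ => ?_
        rw [Finset.mul_sum]
        exact Finset.sum_congr rfl fun j _ => by rw [step1]
    _ = ∑ i ∈ Finset.range m, f (i : ℤ) * ∑ a ∈ Finset.range n, g (a : ℤ) := by
        refine Finset.sum_congr rfl fun i _ => ?_
        rw [step2]
    _ = _ := by rw [← Finset.sum_mul]

lemma sum_cloc_one {p : ℕ} (hp : p.Prime) :
    ∑ a ∈ Finset.range p, (cloc p 1 (a : ℤ)) ^ 2 = (p : ℝ) * ((p : ℝ) - 1) := by
  have hsplit := Finset.sum_filter_add_sum_filter_not (Finset.range p)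
    (fun a : ℕ => (p : ℤ) ∣ (a : ℤ)) (fun a : ℕ => (cloc p 1 (a : ℤ)) ^ 2)
  rw [← hsplit]
  have h1 : (Finset.range p).filter (fun a : ℕ => (p : ℤ) ∣ (a : ℤ)) = {0} := by
    ext a
    simp only [Finset.mem_filter, Finset.mem_range, Finset.mem_singleton]
    constructor
    · rintro ⟨ha, hd⟩
      have hd' : p ∣ a := by exact_mod_cast hd
      exact Nat.eq_zero_of_dvd_of_lt hd' ha |>.symm ▸ rfl
    · rintro rfl
      exact ⟨hp.pos, dvd_zero _⟩
  have hcard := Finset.card_filter_add_card_filter_not (s := Finset.range p)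
    (p := fun a : ℕ => (p : ℤ) ∣ (a : ℤ))
  rw [h1] at hcard
  simp only [Finset.card_singleton, Finset.card_range] at hcard
  have h2 : ∀ a ∈ (Finset.range p).filter (fun a : ℕ => ¬ (p : ℤ) ∣ (a : ℤ)),
      (cloc p 1 (a : ℤ)) ^ 2 = 1 := by
    intro a ha
    rw [Finset.mem_filter] at ha
    simp [cloc, ha.2]
  rw [Finset.sum_congr rfl h2, Finset.sum_const, h1, Finset.sum_singleton]
  have h0 : cloc p 1 ((0 : ℕ) : ℤ) = (p : ℝ) - 1 := by simp [cloc]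
  rw [h0]
  have hcard' : ((Finset.range p).filter (fun a : ℕ => ¬ (p : ℤ) ∣ (a : ℤ))).card = p - 1 := by
    omega
  rw [hcard']
  have h1p : (1 : ℝ) ≤ (p : ℝ) := by exact_mod_cast hp.one_le
  rw [nsmul_eq_mul, Nat.cast_sub hp.one_le]
  push_cast
  ring

lemma dvd_iff_of_lt {p i : ℕ} (hi : i < p) (j : ℕ) :
    (p : ℤ) ∣ ((i + p * j : ℕ) : ℤ) ↔ i = 0 := by
  constructor
  · intro h
    have h' : p ∣ i + p * j := by exact_mod_cast h
    have : p ∣ i := (Nat.dvd_add_right (Dvd.intro j rfl)).mp (by rwa [add_comm] at h')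
    exact Nat.eq_zero_of_dvd_of_lt this hi
  · rintro rfl
    push_cast
    exact ⟨j, by ring⟩

lemma sum_cloc_two {p : ℕ} (hp : p.Prime) :
    ∑ a ∈ Finset.range (p * p), (cloc p 2 (a : ℤ)) ^ 2
      = (p : ℝ) ^ 2 * ((p : ℝ) ^ 2 - (p : ℝ)) := by
  rw [sum_range_mul_decomp p p (fun a => (cloc p 2 (a : ℤ)) ^ 2)]
  have houter : ∀ i ∈ Finset.range p, i ≠ 0 →
      ∑ j ∈ Finset.range p, (cloc p 2 ((i + p * j : ℕ) : ℤ)) ^ 2 = 0 := by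
    intro i hi hne
    refine Finset.sum_eq_zero fun j _ => ?_
    have hnd : ¬ (p : ℤ) ∣ ((i + p * j : ℕ) : ℤ) := by
      rw [dvd_iff_of_lt (Finset.mem_range.mp hi)]
      exact hne
    have hnd2 : ¬ (p : ℤ) ^ 2 ∣ ((i + p * j : ℕ) : ℤ) := fun h =>
      hnd ((dvd_pow_self _ two_ne_zero).trans h)
    push_cast at hnd hnd2
    simp [cloc, hnd, hnd2]
  rw [Finset.sum_eq_single_of_mem 0 (Finset.mem_range.mpr hp.pos) houter]
  have hinner : ∀ j ∈ Finset.range p, j ≠ 0 →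
      (cloc p 2 ((0 + p * j : ℕ) : ℤ)) ^ 2 = (p : ℝ) ^ 2 := by
    intro j hj hne
    have h1 : (p : ℤ) ∣ ((0 + p * j : ℕ) : ℤ) := by push_cast; exact ⟨(j : ℤ), by ring⟩
    have h2 : ¬ (p : ℤ) ^ 2 ∣ ((0 + p * j : ℕ) : ℤ) := by
      intro h
      have h' : (p : ℤ) * (p : ℤ) ∣ (p : ℤ) * (j : ℤ) := by
        rw [← sq]
        refine dvd_trans h ?_
        push_cast
        exact ⟨1, by ring⟩
      have hp0 : (p : ℤ) ≠ 0 := by exact_mod_cast hp.pos.ne'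
      have hj' : (p : ℤ) ∣ (j : ℤ) := (mul_dvd_mul_iff_left hp0).mp h'
      have hjn : p ∣ j := by exact_mod_cast hj'
      exact hne (Nat.eq_zero_of_dvd_of_lt hjn (Finset.mem_range.mp hj))
    push_cast at h1 h2
    rw [zero_add] at h1 h2
    simp [cloc, h1, h2]
  rw [Finset.sum_eq_sum_sdiff_singleton_add (Finset.mem_range.mpr hp.pos)]
  have hv0 : (cloc p 2 ((0 + p * 0 : ℕ) : ℤ)) ^ 2 = ((p : ℝ) * ((p : ℝ) - 1)) ^ 2 := by
    norm_num [cloc]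
  have hconst : ∀ j ∈ Finset.range p \ {0}, (cloc p 2 ((0 + p * j : ℕ) : ℤ)) ^ 2 = (p : ℝ) ^ 2 := by
    intro j hj
    rw [Finset.mem_sdiff, Finset.mem_singleton] at hj
    exact hinner j hj.1 hj.2
  rw [Finset.sum_congr rfl hconst, Finset.sum_const, hv0]
  have hcard : (Finset.range p \ {0}).card = p - 1 := by
    rw [Finset.card_sdiff_of_subset (by simp [Finset.singleton_subset_iff, Finset.mem_range, hp.pos])]
    simp
  rw [hcard, nsmul_eq_mul, Nat.cast_sub hp.one_le]
  push_cast
  ring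

lemma sum_Cfun_sq : ∀ q : ℕ, 0 < q → Cubefree q →
    ∑ a ∈ Finset.range q, (Cfun q (a : ℤ)) ^ 2 = (q : ℝ) * (q.totient : ℝ) := by
  intro q
  induction q using Nat.strong_induction_on with
  | _ q ih =>
    intro hq hcf
    by_cases hq1 : q = 1
    · subst hq1
      simp [Cfun_one]
    · set p := q.minFac with hpdef
      have hp : p.Prime := Nat.minFac_prime hq1
      set e := q.factorization p with he
      set m := q / p ^ e with hmdef
      have hqe : p ^ e * m = q := Nat.ordProj_mul_ordCompl_eq_self q p
      have hcop : Nat.Coprime (p ^ e) m := (Nat.coprime_ordCompl hp hq.ne').pow_left e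
      have hpq : p ∣ q := Nat.minFac_dvd q
      have hppf : p ∈ q.primeFactors := Nat.mem_primeFactors.mpr ⟨hp, hpq, hq.ne'⟩
      have he1 : e ≠ 0 := by
        rw [he, ← Finsupp.mem_support_iff, Nat.support_factorization]
        exact hppf
      have he2 : e = 1 ∨ e = 2 := cubefree_exp hcf hppf
      have hm0 : 0 < m := Nat.ordCompl_pos p hq.ne'
      have hpe2 : 2 ≤ p ^ e := le_trans hp.two_le (Nat.le_self_pow he1 p)
      have hmlt : m < q := by
        calc m < 2 * m := by omega
          _ ≤ p ^ e * m := Nat.mul_le_mul_right m hpe2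
          _ = q := hqe
      have hmcf : Cubefree m := fun r hr hd => hcf r hr (hd.trans (Nat.ordCompl_dvd q p))
      have hsum : ∑ a ∈ Finset.range q, (Cfun q (a : ℤ)) ^ 2
          = (∑ a ∈ Finset.range (p ^ e), (cloc p e (a : ℤ)) ^ 2)
            * (∑ a ∈ Finset.range m, (Cfun m (a : ℤ)) ^ 2) := by
        rw [← crt_sum (pow_pos hp.pos e) hm0 hcop (fun a => (cloc p e a) ^ 2)
          (fun a => (Cfun m a) ^ 2)
          (fun a b hab => by
            show cloc p e a ^ 2 = cloc p e b ^ 2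
            rw [cloc_congr he2 (a := a) (b := b) ?_]
            have hcast : ((p : ℤ)) ^ e = ((p ^ e : ℕ) : ℤ) := by push_cast; ring
            rw [hcast]
            exact hab)
          (fun a b hab => by
            show Cfun m a ^ 2 = Cfun m b ^ 2
            rw [Cfun_congr hm0 hmcf hab])]
        rw [← hqe]
        refine Finset.sum_congr rfl fun a _ => ?_
        rw [Cfun_mul (pow_ne_zero e hp.pos.ne') hm0.ne' hcop, Cfun_prime_pow hp he1]
        ring
      rw [hsum, ih m hmlt hm0 hmcf]
      have hval : ∑ a ∈ Finset.range (p ^ e), (cloc p e (a : ℤ)) ^ 2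
          = ((p ^ e : ℕ) : ℝ) * (((p ^ e).totient : ℕ) : ℝ) := by
        rcases he2 with h | h
        · rw [h, pow_one, sum_cloc_one hp, Nat.totient_prime hp,
            Nat.cast_sub hp.one_le]
          push_cast
          ring
        · rw [h, show p ^ 2 = p * p from sq p, sum_cloc_two hp,
            show p * p = p ^ 2 from (sq p).symm, Nat.totient_prime_pow hp (by norm_num)]
          rw [pow_one, Nat.cast_mul, Nat.cast_sub hp.one_le]
          push_cast
          ring
      rw [hval]
      have ht : q.totient = (p ^ e).totient * m.totient := by
        rw [← hqe, Nat.totient_mul hcop]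
      rw [ht, ← hqe]
      push_cast
      ring


theorem stmt_6 (N : ℕ) (hN : 0 < N) (q : ℕ) (hq : 0 < q) (hcf : Cubefree q) :
    localProd q (fun a => ((thetaStar N q a : ℝ) : ℂ)) (fun a => ((thetaStar N q a : ℝ) : ℂ)) =
      (((6 * tQ q / Real.pi ^ 2) ^ 2 * (q.totient : ℝ) : ℝ) : ℂ) := by
  haveI : NeZero q := ⟨hq.ne'⟩
  have key : ∑ a ∈ Finset.range q, (thetaStar N q (a : ℤ)) ^ 2
      = (6 * tQ q / Real.pi ^ 2) ^ 2 * (q.totient : ℝ) * (q : ℝ) := by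
    have h1 : ∀ a : ℤ, thetaStar N q a = (6 / Real.pi ^ 2) * tQ q * Cfun q ((N : ℤ) - a) :=
      fun a => gammaStar_eq hq hcf _
    have h2 : ∑ a ∈ Finset.range q, (Cfun q ((N : ℤ) - (a : ℤ))) ^ 2
        = ∑ a ∈ Finset.range q, (Cfun q (a : ℤ)) ^ 2 := by
      set Cz : ZMod q → ℝ := fun x => Cfun q ((x.val : ℤ)) with hCz
      have hlift : ∀ b : ℤ, Cfun q b = Cz ((b : ZMod q)) := fun b =>
        eq_zmod_lift hq (Cfun q) (fun a b hab => Cfun_congr hq hcf hab) b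
      calc ∑ a ∈ Finset.range q, (Cfun q ((N : ℤ) - (a : ℤ))) ^ 2
          = ∑ a ∈ Finset.range q, (Cz (((N : ℤ) : ZMod q) - ((a : ℕ) : ZMod q))) ^ 2 := by
            refine Finset.sum_congr rfl fun a _ => ?_
            rw [hlift]
            congr 2
            push_cast
            ring
        _ = ∑ x : ZMod q, (Cz (((N : ℤ) : ZMod q) - x)) ^ 2 :=
            sum_range_zmod (fun x => (Cz (((N : ℤ) : ZMod q) - x)) ^ 2)
        _ = ∑ x : ZMod q, (Cz x) ^ 2 :=
            Fintype.sum_bijective (fun x : ZMod q => ((N : ℤ) : ZMod q) - x)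
              (Equiv.subLeft (((N : ℤ) : ZMod q))).bijective _ _ (fun x => rfl)
        _ = ∑ a ∈ Finset.range q, (Cfun q (a : ℤ)) ^ 2 := by
            rw [← sum_range_zmod (fun x => (Cz x) ^ 2)]
            refine Finset.sum_congr rfl fun a _ => ?_
            rw [hlift (a : ℤ)]
            norm_cast
    calc ∑ a ∈ Finset.range q, (thetaStar N q (a : ℤ)) ^ 2
        = ∑ a ∈ Finset.range q, ((6 / Real.pi ^ 2) * tQ q) ^ 2 * (Cfun q ((N : ℤ) - (a : ℤ))) ^ 2 := by
          refine Finset.sum_congr rfl fun a _ => ?_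
          rw [h1]
          ring
      _ = ((6 / Real.pi ^ 2) * tQ q) ^ 2 * ∑ a ∈ Finset.range q, (Cfun q ((N : ℤ) - (a : ℤ))) ^ 2 := by
          rw [← Finset.mul_sum]
      _ = ((6 / Real.pi ^ 2) * tQ q) ^ 2 * ((q : ℝ) * (q.totient : ℝ)) := by
          rw [h2, sum_Cfun_sq q hq hcf]
      _ = (6 * tQ q / Real.pi ^ 2) ^ 2 * (q.totient : ℝ) * (q : ℝ) := by ring
  rw [localProd]
  have hterm : ∀ a ∈ Finset.range q,
      (((thetaStar N q ((a : ℕ) : ℤ) : ℝ) : ℂ)) * (starRingEnd ℂ) (((thetaStar N q ((a : ℕ) : ℤ) : ℝ) : ℂ))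
      = ((((thetaStar N q ((a : ℕ) : ℤ)) ^ 2 : ℝ)) : ℂ) := by
    intro a _
    rw [Complex.conj_ofReal, ← Complex.ofReal_mul, sq]
  rw [Finset.sum_congr rfl hterm, ← Complex.ofReal_sum, key]
  have hq0 : (q : ℂ) ≠ 0 := Nat.cast_ne_zero.mpr hq.ne'
  push_cast
  field_simp


end
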